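/- Let V be a finite index set and, for each v ∈ V, let W_v > 0, Ξ1_v > 0, Ξ3_v > 0, c_v > 0 and d_v ≥ 0 be real constants. Then the function F(R) = Σ_{v ∈ V} c_v / (1 − exp(Ξ1_v − Ξ3_v/(2^{R_v/W_v} − 1))) + max_{v ∈ V} d_v·exp(−(2^{R_v/W_v} − 1)), defined for R : V → ℝ, is convex on the convex set {R : for all v ∈ V, 0 < R_v < W_v·log₂(1 + Ξ3_v/Ξ1_v)}. -/

import Mathlib

open Real

/-- Key scalar inequality: `2 (e^w - 1) ≤ w (e^w + 1)` for `w ≥ 0`. -/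
lemma aux_key_ineq {w : ℝ} (hw : 0 ≤ w) :
    2 * (Real.exp w - 1) ≤ w * (Real.exp w + 1) := by
  have hmono : MonotoneOn (fun t : ℝ => t * Real.exp t + t - 2 * Real.exp t + 2)
      (Set.Ici (0 : ℝ)) := by
    have hder : ∀ t : ℝ, HasDerivAt (fun t : ℝ => t * Real.exp t + t - 2 * Real.exp t + 2)
        ((t - 1) * Real.exp t + 1) t := by
      intro t
      have h1 : HasDerivAt (fun t : ℝ => t * Real.exp t)
          (1 * Real.exp t + t * Real.exp t) t :=
        (hasDerivAt_id t).mul (Real.hasDerivAt_exp t)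
      have h2 : HasDerivAt (fun t : ℝ => 2 * Real.exp t) (2 * Real.exp t) t :=
        (Real.hasDerivAt_exp t).const_mul 2
      have := ((h1.add (hasDerivAt_id t)).sub h2).add_const 2
      refine this.congr_deriv ?_
      ring
    refine monotoneOn_of_deriv_nonneg (convex_Ici 0)
      (fun t _ => ((hder t).continuousAt.continuousWithinAt)) (fun t _ =>
        (hder t).differentiableAt.differentiableWithinAt) ?_
    intro t ht
    rw [interior_Ici] at ht
    rw [(hder t).deriv]
    have h1 : -t + 1 ≤ Real.exp (-t) := Real.add_one_le_exp (-t)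
    have h3 : (0:ℝ) < Real.exp t := Real.exp_pos t
    have h2 : Real.exp (-t) * Real.exp t = 1 := by
      rw [← Real.exp_add]; simp
    nlinarith [mul_le_mul_of_nonneg_right h1 h3.le]
  have h0 := hmono (Set.self_mem_Ici) (Set.mem_Ici.2 hw) hw
  simp only [Real.exp_zero] at h0
  nlinarith [h0]

/-- Multiplicative form with `E = e^{-w}`. -/
lemma aux_key_ineq' {w : ℝ} (hw : 0 ≤ w) :
    2 * (1 - Real.exp (-w)) ≤ w * (1 + Real.exp (-w)) := by
  have h := aux_key_ineq hw
  have hE : Real.exp (-w) * Real.exp w = 1 := by rw [← Real.exp_add]; simp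
  have hEpos : (0:ℝ) < Real.exp (-w) := Real.exp_pos _
  nlinarith [mul_le_mul_of_nonneg_left h hEpos.le]

/-- A pointwise `sup'` of convex functions is convex. -/
lemma aux_convexOn_sup' {ι E : Type*} [AddCommMonoid E] [SMul ℝ E] {s : Set E}
    {t : Finset ι} (ht : t.Nonempty) {g : ι → E → ℝ}
    (hg : ∀ i ∈ t, ConvexOn ℝ s (g i)) :
    ConvexOn ℝ s (fun x => t.sup' ht (fun i => g i x)) := by
  induction ht using Finset.Nonempty.cons_induction with
  | singleton a => simpa using hg a (by simp)
  | cons a t ha hne ih =>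
    simp only [Finset.sup'_cons, hne]
    have h1 : ConvexOn ℝ s (g a) := hg a (by simp)
    have h2 : ConvexOn ℝ s (fun x => t.sup' hne (fun i => g i x)) :=
      ih (fun i hi => hg i (by simp [hi]))
    exact h1.sup h2

set_option maxHeartbeats 2000000 in
/-- Convexity of the per-client convergence-penalty term. -/
lemma aux_convexOn_phi1 (W a b cc : ℝ) (hW : 0 < W) (ha : 0 < a) (hb : 0 < b)
    (hcc : 0 < cc) :
    ConvexOn ℝ (Set.Ioo 0 (W * Real.logb 2 (1 + b / a)))
      (fun x => cc / (1 - Real.exp (a - b / (Real.exp (Real.log 2 / W * x) - 1)))) := by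
  set k : ℝ := Real.log 2 / W with hk_def
  have hlog2 : (0:ℝ) < Real.log 2 := Real.log_pos (by norm_num)
  have hk : 0 < k := div_pos hlog2 hW
  set U : ℝ := W * Real.logb 2 (1 + b / a) with hU_def
  have hba : (0:ℝ) < b / a := div_pos hb ha
  have hkU : k * U = Real.log (1 + b / a) := by
    rw [hU_def, hk_def, Real.logb]
    field_simp
  clear_value k U
  -- facts at interior points
  have hmem : ∀ x ∈ Set.Ioo (0:ℝ) U,
      1 < Real.exp (k * x) ∧ Real.exp (k * x) - 1 < b / a := by
    intro x hx
    refine ⟨Real.one_lt_exp_iff.2 (mul_pos hk hx.1), ?_⟩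
    have h1 : k * x < k * U := mul_lt_mul_of_pos_left hx.2 hk
    rw [hkU] at h1
    have h2 := Real.exp_lt_exp.2 h1
    rw [Real.exp_log (by linarith)] at h2
    linarith
  -- first derivative
  have hder1 : ∀ x ∈ Set.Ioo (0:ℝ) U,
      HasDerivAt (fun x => cc / (1 - Real.exp (a - b / (Real.exp (k * x) - 1))))
        (cc * b * k * (Real.exp (k * x) * Real.exp (a - b / (Real.exp (k * x) - 1))) /
          ((Real.exp (k * x) - 1) ^ 2 *
            (1 - Real.exp (a - b / (Real.exp (k * x) - 1))) ^ 2)) x := by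
    intro x hx
    obtain ⟨hu1, hyb⟩ := hmem x hx
    have hy : 0 < Real.exp (k * x) - 1 := by linarith
    have hy0 : Real.exp (k * x) - 1 ≠ 0 := ne_of_gt hy
    have haw : a < b / (Real.exp (k * x) - 1) := by
      have hab : a * (b / a) = b := by field_simp
      rw [lt_div_iff₀ hy]
      nlinarith [mul_lt_mul_of_pos_left hyb ha]
    have hE1 : Real.exp (a - b / (Real.exp (k * x) - 1)) < 1 :=
      Real.exp_lt_one_iff.2 (by linarith)
    have hD0 : 1 - Real.exp (a - b / (Real.exp (k * x) - 1)) ≠ 0 := by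
      have := Real.exp_pos (a - b / (Real.exp (k * x) - 1)); intro h; nlinarith
    have h1 : HasDerivAt (fun y : ℝ => k * y) (k * 1) x := (hasDerivAt_id x).const_mul k
    have h2 := h1.exp
    have h3 := h2.sub_const 1
    have h4 := (hasDerivAt_const x b).div h3 hy0
    have h5 := h4.const_sub a
    have h6 := h5.exp
    have h7 := h6.const_sub 1
    have h8 := (hasDerivAt_const x cc).div h7 hD0
    refine h8.congr_deriv ?_
    simp only [Pi.div_apply, Pi.neg_apply, Pi.mul_apply, Pi.pow_apply]
    field_simp
    ring
  refine convexOn_of_hasDerivWithinAt2_nonneg (f' := fun x =>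
      cc * b * k * (Real.exp (k * x) * Real.exp (a - b / (Real.exp (k * x) - 1))) /
        ((Real.exp (k * x) - 1) ^ 2 *
          (1 - Real.exp (a - b / (Real.exp (k * x) - 1))) ^ 2))
    (f'' := fun x =>
      cc * b * k * (k * Real.exp (k * x) * Real.exp (a - b / (Real.exp (k * x) - 1)) *
          (1 - Real.exp (a - b / (Real.exp (k * x) - 1))) *
          ((1 - Real.exp (a - b / (Real.exp (k * x) - 1))) *
              (b * Real.exp (k * x) - ((Real.exp (k * x)) ^ 2 - 1)) +
            2 * b * Real.exp (k * x) * Real.exp (a - b / (Real.exp (k * x) - 1)))) /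
        (((Real.exp (k * x) - 1) ^ 2 *
            (1 - Real.exp (a - b / (Real.exp (k * x) - 1))) ^ 2) ^ 2))
    (convex_Ioo _ _) (fun x hx => (hder1 x hx).continuousAt.continuousWithinAt) ?_ ?_ ?_
  · intro x hx
    rw [interior_Ioo] at hx
    exact (hder1 x hx).hasDerivWithinAt
  · intro x hx
    rw [interior_Ioo] at hx
    obtain ⟨hu1, hyb⟩ := hmem x hx
    have hy : 0 < Real.exp (k * x) - 1 := by linarith
    have hy0 : Real.exp (k * x) - 1 ≠ 0 := ne_of_gt hy
    have haw : a < b / (Real.exp (k * x) - 1) := by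
      have hab : a * (b / a) = b := by field_simp
      rw [lt_div_iff₀ hy]
      nlinarith [mul_lt_mul_of_pos_left hyb ha]
    have hE1 : Real.exp (a - b / (Real.exp (k * x) - 1)) < 1 :=
      Real.exp_lt_one_iff.2 (by linarith)
    have hD0 : 1 - Real.exp (a - b / (Real.exp (k * x) - 1)) ≠ 0 := by
      have := Real.exp_pos (a - b / (Real.exp (k * x) - 1)); intro h; nlinarith
    have h1 : HasDerivAt (fun y : ℝ => k * y) (k * 1) x := (hasDerivAt_id x).const_mul k
    have h2 := h1.exp
    have h3 := h2.sub_const 1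
    have h4 := (hasDerivAt_const x b).div h3 hy0
    have h5 := h4.const_sub a
    have h6 := h5.exp
    have h7 := h6.const_sub 1
    have h9 := h2.mul h6
    have h10 := h9.const_mul (cc * b * k)
    have h11 := h3.pow 2
    have h12 := h7.pow 2
    have h13 := h11.mul h12
    have hg0 : (Real.exp (k * x) - 1) ^ 2 *
        (1 - Real.exp (a - b / (Real.exp (k * x) - 1))) ^ 2 ≠ 0 :=
      mul_ne_zero (pow_ne_zero 2 hy0) (pow_ne_zero 2 hD0)
    have h14 := h10.div h13 hg0
    refine HasDerivAt.hasDerivWithinAt ?_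
    refine h14.congr_deriv ?_
    simp only [Pi.div_apply, Pi.neg_apply, Pi.mul_apply, Pi.pow_apply]
    beta_reduce
    set u : ℝ := Real.exp (k * x) with hu_def
    set E : ℝ := Real.exp (a - b / (u - 1)) with hE_def
    clear_value E
    clear_value u
    field_simp
    ring
  · intro x hx
    rw [interior_Ioo] at hx
    obtain ⟨hu1, hyb⟩ := hmem x hx
    have hy : 0 < Real.exp (k * x) - 1 := by linarith
    have hy0 : Real.exp (k * x) - 1 ≠ 0 := ne_of_gt hy
    have haw : a < b / (Real.exp (k * x) - 1) := by
      have hab : a * (b / a) = b := by field_simp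
      rw [lt_div_iff₀ hy]
      nlinarith [mul_lt_mul_of_pos_left hyb ha]
    set u : ℝ := Real.exp (k * x) with hu_def
    set E : ℝ := Real.exp (a - b / (u - 1)) with hE_def
    have hE1 : E < 1 := Real.exp_lt_one_iff.2 (by linarith)
    have hE0 : 0 < E := Real.exp_pos _
    have hD : 0 < 1 - E := by linarith
    set w : ℝ := b / (u - 1) - a with hw_def
    have hw : 0 < w := by rw [hw_def]; linarith
    have hEeq : E = Real.exp (-w) := by
      rw [hE_def, hw_def]; congr 1; ring
    have hkey : 2 * (1 - E) ≤ w * (1 + E) := by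
      rw [hEeq]; exact aux_key_ineq' hw.le
    have hbw : b = (w + a) * (u - 1) := by
      rw [hw_def]; field_simp; ring
    have hu0 : (0:ℝ) < u := by linarith
    -- the bracket is nonnegative
    have t1 : u * (2 * (1 - E)) ≤ u * (w * (1 + E)) :=
      mul_le_mul_of_nonneg_left hkey hu0.le
    have t2 : 0 ≤ (u - 1) * (1 - E) := mul_nonneg (by linarith) hD.le
    have t3 : 0 ≤ a * u * (1 + E) := by positivity
    have t4 : (u + 1) * (1 - E) ≤ (w + a) * u * (1 + E) := by nlinarith
    have hBeq : (1 - E) * (b * u - (u ^ 2 - 1)) + 2 * b * u * E =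
        (u - 1) * ((w + a) * u * (1 + E) - (u + 1) * (1 - E)) := by
      rw [hbw]; ring
    have hB : 0 ≤ (1 - E) * (b * u - (u ^ 2 - 1)) + 2 * b * u * E := by
      rw [hBeq]
      exact mul_nonneg (by linarith) (by linarith)
    have hdenpos : (0:ℝ) < ((u - 1) ^ 2 * (1 - E) ^ 2) ^ 2 := by positivity
    refine div_nonneg ?_ hdenpos.le
    refine mul_nonneg (by positivity) ?_
    exact mul_nonneg (mul_nonneg (by positivity) hD.le) hB

/-- Convexity of the per-client round-time penalty term. -/
lemma aux_convexOn_phi2 (k dd : ℝ) (hk : 0 < k) (hd : 0 ≤ dd) :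
    ConvexOn ℝ (Set.Ioi (0:ℝ))
      (fun x => dd * Real.exp (-(Real.exp (k * x) - 1))) := by
  have hder1 : ∀ x : ℝ,
      HasDerivAt (fun x => dd * Real.exp (-(Real.exp (k * x) - 1)))
        (-(dd * k) * (Real.exp (k * x) * Real.exp (-(Real.exp (k * x) - 1)))) x := by
    intro x
    have h1 : HasDerivAt (fun y : ℝ => k * y) (k * 1) x := (hasDerivAt_id x).const_mul k
    have h2 := h1.exp
    have h3 := h2.sub_const 1
    have h4 := h3.neg
    have h5 := h4.exp
    have h6 := h5.const_mul dd
    refine h6.congr_deriv ?_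
    simp only [Pi.div_apply, Pi.neg_apply, Pi.mul_apply, Pi.pow_apply]
    ring
  refine convexOn_of_hasDerivWithinAt2_nonneg (f' := fun x =>
      -(dd * k) * (Real.exp (k * x) * Real.exp (-(Real.exp (k * x) - 1))))
    (f'' := fun x =>
      dd * k ^ 2 * (Real.exp (k * x) * (Real.exp (k * x) - 1) *
        Real.exp (-(Real.exp (k * x) - 1))))
    (convex_Ioi _) (fun x _ => (hder1 x).continuousAt.continuousWithinAt) ?_ ?_ ?_
  · intro x _
    exact (hder1 x).hasDerivWithinAt
  · intro x _
    have h1 : HasDerivAt (fun y : ℝ => k * y) (k * 1) x := (hasDerivAt_id x).const_mul k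
    have h2 := h1.exp
    have h3 := h2.sub_const 1
    have h4 := h3.neg
    have h5 := h4.exp
    have h7 := h2.mul h5
    have h8 := h7.const_mul (-(dd * k))
    refine HasDerivAt.hasDerivWithinAt ?_
    refine h8.congr_deriv ?_
    simp only [Pi.div_apply, Pi.neg_apply, Pi.mul_apply, Pi.pow_apply]
    ring
  · intro x hx
    rw [interior_Ioi] at hx
    have h1u : (1:ℝ) ≤ Real.exp (k * x) := by
      rw [← Real.exp_zero]
      exact Real.exp_le_exp.2 (mul_nonneg hk.le hx.le)
    refine mul_nonneg (by positivity) ?_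
    exact mul_nonneg (mul_nonneg (by positivity) (by linarith)) (by positivity)

theorem stmt_2 {V : Type*} [Fintype V] [Nonempty V]
    (W Ξ1 Ξ3 c d : V → ℝ)
    (hW : ∀ v, 0 < W v) (hΞ1 : ∀ v, 0 < Ξ1 v) (hΞ3 : ∀ v, 0 < Ξ3 v)
    (hc : ∀ v, 0 < c v) (hd : ∀ v, 0 ≤ d v) :
    ConvexOn ℝ
      {R : V → ℝ | ∀ v, 0 < R v ∧ R v < W v * Real.logb 2 (1 + Ξ3 v / Ξ1 v)}
      (fun R : V → ℝ =>
        (∑ v, c v / (1 - Real.exp (Ξ1 v - Ξ3 v / ((2 : ℝ) ^ (R v / W v) - 1)))) +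
          Finset.univ.sup' Finset.univ_nonempty
            (fun v => d v * Real.exp (-((2 : ℝ) ^ (R v / W v) - 1)))) := by
  classical
  have hlog2 : (0:ℝ) < Real.log 2 := Real.log_pos (by norm_num)
  have hpow : ∀ (v : V) (x : ℝ),
      (2:ℝ) ^ (x / W v) = Real.exp (Real.log 2 / W v * x) := by
    intro v x
    rw [Real.rpow_def_of_pos (by norm_num : (0:ℝ) < 2)]
    congr 1
    have := (hW v).ne'
    field_simp
  simp only [hpow]
  have hSconv : Convex ℝ
      {R : V → ℝ | ∀ v, 0 < R v ∧ R v < W v * Real.logb 2 (1 + Ξ3 v / Ξ1 v)} := by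
    have hset : {R : V → ℝ | ∀ v, 0 < R v ∧ R v < W v * Real.logb 2 (1 + Ξ3 v / Ξ1 v)} =
        Set.pi Set.univ (fun v => Set.Ioo 0 (W v * Real.logb 2 (1 + Ξ3 v / Ξ1 v))) := by
      ext R
      simp [Set.mem_pi, Set.mem_Ioo]
    rw [hset]
    exact convex_pi fun v _ => convex_Ioo _ _
  have hcoord : ∀ (v : V) (φ : ℝ → ℝ),
      ConvexOn ℝ (Set.Ioo 0 (W v * Real.logb 2 (1 + Ξ3 v / Ξ1 v))) φ →
      ConvexOn ℝ {R : V → ℝ | ∀ v, 0 < R v ∧ R v < W v * Real.logb 2 (1 + Ξ3 v / Ξ1 v)}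
        (fun R : V → ℝ => φ (R v)) := by
    intro v φ hφ
    refine ⟨hSconv, fun R hR Q hQ α β hα hβ hαβ => ?_⟩
    have h := hφ.2 (Set.mem_Ioo.2 ⟨(hR v).1, (hR v).2⟩)
      (Set.mem_Ioo.2 ⟨(hQ v).1, (hQ v).2⟩) hα hβ hαβ
    simpa using h
  have hsum : ∀ t : Finset V,
      ConvexOn ℝ {R : V → ℝ | ∀ v, 0 < R v ∧ R v < W v * Real.logb 2 (1 + Ξ3 v / Ξ1 v)}
        (fun R : V → ℝ => ∑ v ∈ t,
          c v / (1 - Real.exp (Ξ1 v - Ξ3 v / (Real.exp (Real.log 2 / W v * R v) - 1)))) := by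
    intro t
    induction t using Finset.induction_on with
    | empty => simpa using convexOn_const (0:ℝ) hSconv
    | insert _ _ hnm ih =>
      simp only [Finset.sum_insert hnm]
      exact (hcoord _ _ (aux_convexOn_phi1 _ _ _ _ (hW _) (hΞ1 _) (hΞ3 _) (hc _))).add ih
  have hsup : ConvexOn ℝ
      {R : V → ℝ | ∀ v, 0 < R v ∧ R v < W v * Real.logb 2 (1 + Ξ3 v / Ξ1 v)}
      (fun R : V → ℝ => Finset.univ.sup' Finset.univ_nonempty
        (fun v => d v * Real.exp (-(Real.exp (Real.log 2 / W v * R v) - 1)))) := by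
    refine aux_convexOn_sup'
      (g := fun v (R : V → ℝ) => d v * Real.exp (-(Real.exp (Real.log 2 / W v * R v) - 1)))
      Finset.univ_nonempty (fun v _ => by
        exact hcoord v _ ((aux_convexOn_phi2 (Real.log 2 / W v) (d v)
          (div_pos hlog2 (hW v)) (hd v)).subset Set.Ioo_subset_Ioi_self (convex_Ioo _ _)))
  exact (hsum Finset.univ).add hsup
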